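/- Let q ≥ 2 and suppose that for Banach spaces E₁,…,Eₙ every bounded n-linear form on E₁×⋯×Eₙ is multiple (q;q₁,…,qₙ)-summing (with a uniform constant). Then for any further Banach space E_{n+1}, every bounded (n+1)-linear form on E₁×⋯×Eₙ×E_{n+1} is multiple (q;q₁,…,qₙ,1)-summing. -/

import Mathlib

open scoped BigOperators

/-- The weak `ℓ_p` norm of a finite family in a normed space. -/
noncomputable def weakNorm (𝕜 : Type*) [RCLike 𝕜] {E : Type*} [NormedAddCommGroup E]
    [NormedSpace 𝕜 E] (p : ℝ) {m : ℕ} (x : Fin m → E) : ℝ :=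
  sSup {s | ∃ φ : E →L[𝕜] 𝕜, ‖φ‖ ≤ 1 ∧ s = (∑ j, ‖φ (x j)‖ ^ p) ^ p⁻¹}

section aux
variable {𝕜 : Type*} [RCLike 𝕜]

private def sg (b : Bool) : 𝕜 := if b then 1 else -1

private lemma par (z w : 𝕜) : ‖z + w‖ ^ 2 + ‖z - w‖ ^ 2 = 2 * ‖z‖ ^ 2 + 2 * ‖w‖ ^ 2 := by
  simp only [RCLike.norm_sq_eq_def, map_add, map_sub]
  ring

private lemma norm_sg (b : Bool) : ‖(sg b : 𝕜)‖ = 1 := by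
  cases b <;> simp [sg]

private lemma rademacher (m : ℕ) (c : Fin m → 𝕜) :
    ∑ ε : Fin m → Bool, ‖∑ k, sg (ε k) * c k‖ ^ 2 = 2 ^ m * ∑ k, ‖c k‖ ^ 2 := by
  induction m with
  | zero => simp
  | succ m IH =>
    rw [← Equiv.sum_comp (Fin.consEquiv fun _ => Bool)
      (fun ε : Fin (m+1) → Bool => ‖∑ k, sg (ε k) * c k‖ ^ 2)]
    rw [Fintype.sum_prod_type_right]
    have : ∀ ε' : Fin m → Bool,
        (∑ b : Bool, ‖∑ k, sg ((Fin.consEquiv fun _ => Bool) (b, ε') k) * c k‖ ^ 2)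
          = 2 * ‖∑ k : Fin m, sg (ε' k) * c (Fin.succ k)‖ ^ 2 + 2 * ‖c 0‖ ^ 2 := by
      intro ε'
      have hε : ∀ b, (fun k => sg ((Fin.consEquiv fun _ => Bool) (b, ε') k) * c k)
          = fun k => sg ((Fin.cons b ε' : ∀ _ : Fin (m+1), Bool) k) * c k := fun b => rfl
      simp only [Fintype.sum_bool, hε, Fin.sum_univ_succ, Fin.cons_zero, Fin.cons_succ]
      have h1 : sg (true : Bool) = (1 : 𝕜) := rfl
      have h2 : sg (false : Bool) = (-1 : 𝕜) := rfl
      rw [h1, h2]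
      calc ‖1 * c 0 + ∑ k : Fin m, sg (ε' k) * c k.succ‖ ^ 2 +
            ‖-1 * c 0 + ∑ k : Fin m, sg (ε' k) * c k.succ‖ ^ 2
          = ‖(∑ k : Fin m, sg (ε' k) * c k.succ) + c 0‖ ^ 2 +
            ‖(∑ k : Fin m, sg (ε' k) * c k.succ) - c 0‖ ^ 2 := by ring_nf
        _ = 2 * ‖∑ k : Fin m, sg (ε' k) * c (Fin.succ k)‖ ^ 2 + 2 * ‖c 0‖ ^ 2 := par _ _
    rw [Finset.sum_congr rfl fun ε' _ => this ε']
    rw [Finset.sum_add_distrib, ← Finset.mul_sum, IH (fun k => c k.succ), Finset.sum_const,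
      Finset.card_univ]
    simp only [Fintype.card_fun, Fintype.card_bool, Fintype.card_fin, nsmul_eq_mul]
    rw [Fin.sum_univ_succ (f := fun k => ‖c k‖ ^ 2)]
    push_cast
    ring

private lemma add_rpow_le (a b : ℝ) (ha : 0 ≤ a) (hb : 0 ≤ b) {r : ℝ} (hr : 1 ≤ r) :
    a ^ r + b ^ r ≤ (a + b) ^ r := by
  lift a to NNReal using ha
  lift b to NNReal using hb
  have := NNReal.add_rpow_le_rpow_add a b hr
  exact_mod_cast this

private lemma sum_rpow_le {ι : Type*} (s : Finset ι) (f : ι → ℝ) (hf : ∀ i ∈ s, 0 ≤ f i)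
    {r : ℝ} (hr : 1 ≤ r) : ∑ i ∈ s, f i ^ r ≤ (∑ i ∈ s, f i) ^ r := by
  classical
  induction s using Finset.induction with
  | empty => simp [Real.zero_rpow (by positivity : r ≠ 0)]
  | insert _ _ hns ih =>
    rename_i a s'
    rw [Finset.sum_insert hns, Finset.sum_insert hns]
    have h1 : ∑ i ∈ s', f i ^ r ≤ (∑ i ∈ s', f i) ^ r :=
      ih fun i hi => hf i (Finset.mem_insert_of_mem hi)
    calc f a ^ r + ∑ i ∈ s', f i ^ r ≤ f a ^ r + (∑ i ∈ s', f i) ^ r := by linarith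
      _ ≤ (f a + ∑ i ∈ s', f i) ^ r :=
        add_rpow_le _ _ (hf a (Finset.mem_insert_self a s'))
          (Finset.sum_nonneg fun i hi => hf i (Finset.mem_insert_of_mem hi)) hr

variable {E : Type*} [NormedAddCommGroup E] [NormedSpace 𝕜 E]

private lemma weakNorm_bddAbove {p : ℝ} (hp : 0 ≤ p) {m : ℕ} (x : Fin m → E) :
    BddAbove {s | ∃ φ : E →L[𝕜] 𝕜, ‖φ‖ ≤ 1 ∧ s = (∑ j, ‖φ (x j)‖ ^ p) ^ p⁻¹} := by
  refine ⟨(∑ j, ‖x j‖ ^ p) ^ p⁻¹, fun s hs => ?_⟩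
  obtain ⟨φ, hφ, rfl⟩ := hs
  refine Real.rpow_le_rpow (Finset.sum_nonneg fun j _ => Real.rpow_nonneg (norm_nonneg _) _)
    (Finset.sum_le_sum fun j _ => Real.rpow_le_rpow (norm_nonneg _) ?_ hp)
    (by positivity)
  calc ‖φ (x j)‖ ≤ ‖φ‖ * ‖x j‖ := φ.le_opNorm _
    _ ≤ 1 * ‖x j‖ := by gcongr
    _ = ‖x j‖ := one_mul _

private lemma le_weakNorm {p : ℝ} (hp : 0 ≤ p) {m : ℕ} (x : Fin m → E)
    (φ : E →L[𝕜] 𝕜) (hφ : ‖φ‖ ≤ 1) :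
    (∑ j, ‖φ (x j)‖ ^ p) ^ p⁻¹ ≤ weakNorm 𝕜 p x :=
  le_csSup (weakNorm_bddAbove hp x) ⟨φ, hφ, rfl⟩

private lemma weakNorm_nonneg {p : ℝ} (hp : 0 < p) {m : ℕ} (x : Fin m → E) :
    0 ≤ weakNorm 𝕜 p x := by
  have h := le_weakNorm (𝕜 := 𝕜) hp.le x 0 (by simp)
  simpa [Real.zero_rpow hp.ne', Real.zero_rpow (inv_ne_zero hp.ne')] using h

private lemma norm_signed_sum_le {m : ℕ} (y : Fin m → E) (ε : Fin m → Bool) :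
    ‖∑ k, (sg (ε k) : 𝕜) • y k‖ ≤ weakNorm 𝕜 1 y := by
  obtain ⟨g, hg1, hgx⟩ := exists_dual_vector'' 𝕜 (∑ k, (sg (ε k) : 𝕜) • y k)
  have h1 : ‖∑ k, (sg (ε k) : 𝕜) • y k‖ = ‖g (∑ k, (sg (ε k) : 𝕜) • y k)‖ := by
    rw [hgx]
    simp
  rw [h1, map_sum]
  calc ‖∑ k, g ((sg (ε k) : 𝕜) • y k)‖ ≤ ∑ k, ‖g ((sg (ε k) : 𝕜) • y k)‖ :=
        norm_sum_le _ _
    _ = ∑ k, ‖g (y k)‖ := by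
        refine Finset.sum_congr rfl fun k _ => ?_
        rw [map_smul, smul_eq_mul, norm_mul, norm_sg, one_mul]
    _ = (∑ k, ‖g (y k)‖ ^ (1 : ℝ)) ^ (1 : ℝ)⁻¹ := by simp [Real.rpow_one]
    _ ≤ weakNorm 𝕜 1 y := le_weakNorm zero_le_one y g hg1

end aux

/-- Extension principle: if every bounded `n`-linear form on `G₀ × ⋯ × G_{n-1}` is
multiple `(q; q₁,…,qₙ)`-summing with a uniform constant, then every bounded
`(n+1)`-linear form on `G₀ × ⋯ × Gₙ` is multiple `(q; q₁,…,qₙ,1)`-summing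
(with a uniform constant), provided `q ≥ 2`. -/
theorem multiple_summing_extension {𝕜 : Type*} [RCLike 𝕜] {n : ℕ}
    {G : Fin (n + 1) → Type*}
    [∀ i, NormedAddCommGroup (G i)] [∀ i, NormedSpace 𝕜 (G i)] [∀ i, CompleteSpace (G i)]
    (q : ℝ) (hq : 2 ≤ q) (p : Fin (n + 1) → ℝ) (hp : ∀ i, 1 ≤ p i)
    (hlast : p (Fin.last n) = 1)
    (hyp : ∃ c₁, 0 ≤ c₁ ∧
      ∀ (T : ContinuousMultilinearMap 𝕜 (fun i : Fin n => G i.castSucc) 𝕜)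
        (m : ℕ) (x : ∀ i : Fin n, Fin m → G i.castSucc),
        (∑ j : Fin n → Fin m, ‖T (fun i => x i (j i))‖ ^ q) ^ q⁻¹ ≤
          c₁ * ‖T‖ * ∏ i, weakNorm 𝕜 (p i.castSucc) (x i)) :
    ∃ c₂, 0 ≤ c₂ ∧
      ∀ (S : ContinuousMultilinearMap 𝕜 G 𝕜)
        (m : ℕ) (x : ∀ i : Fin (n + 1), Fin m → G i),
        (∑ j : Fin (n + 1) → Fin m, ‖S (fun i => x i (j i))‖ ^ q) ^ q⁻¹ ≤
          c₂ * ‖S‖ * ∏ i, weakNorm 𝕜 (p i) (x i) := by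
  classical
  obtain ⟨c₁, hc₁, H⟩ := hyp
  refine ⟨c₁, hc₁, fun S m x => ?_⟩
  have hq0 : (0 : ℝ) < q := by linarith
  have hq2 : (1 : ℝ) ≤ q / 2 := by linarith
  set y : Fin m → G (Fin.last n) := x (Fin.last n) with hy
  set x' : ∀ i : Fin n, Fin m → G i.castSucc := fun i => x i.castSucc with hx'
  set w : ℝ := ∏ i : Fin n, weakNorm 𝕜 (p i.castSucc) (x' i) with hw
  set wl : ℝ := weakNorm 𝕜 1 y with hwl
  have hwnn : 0 ≤ w :=
    Finset.prod_nonneg fun i _ => weakNorm_nonneg (by linarith [hp i.castSucc]) _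
  have hwlnn : 0 ≤ wl := weakNorm_nonneg one_pos y
  -- the coefficients
  set c : (Fin n → Fin m) → Fin m → 𝕜 :=
    fun j' k => S (Fin.snoc (fun i => x' i (j' i)) (y k)) with hc
  -- signed sums in the last space
  set Y : (Fin m → Bool) → G (Fin.last n) := fun ε => ∑ k, (sg (ε k) : 𝕜) • y k with hY
  have hYle : ∀ ε, ‖Y ε‖ ≤ wl := fun ε => norm_signed_sum_le y ε
  -- the n-linear forms obtained by plugging in Y ε
  set T : (Fin m → Bool) → ContinuousMultilinearMap 𝕜 (fun i : Fin n => G i.castSucc) 𝕜 :=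
    fun ε => (ContinuousLinearMap.apply 𝕜 𝕜 (Y ε)).compContinuousMultilinearMap
      S.curryRight with hT
  have hTapp : ∀ ε (z : ∀ i : Fin n, G i.castSucc), T ε z = S.curryRight z (Y ε) := by
    intro ε z
    rfl
  have hTnorm : ∀ ε, ‖T ε‖ ≤ ‖S‖ * wl := by
    intro ε
    have h1 : ‖ContinuousLinearMap.apply 𝕜 𝕜 (Y ε)‖ ≤ ‖Y ε‖ := by
      refine ContinuousLinearMap.opNorm_le_bound _ (norm_nonneg _) fun f => ?_
      rw [mul_comm]
      exact f.le_opNorm _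
    have h2 : ‖S.curryRight‖ = ‖S‖ := (continuousMultilinearCurryRightEquiv 𝕜 G 𝕜).norm_map S
    calc ‖T ε‖ ≤ ‖ContinuousLinearMap.apply 𝕜 𝕜 (Y ε)‖ * ‖S.curryRight‖ :=
          ContinuousLinearMap.norm_compContinuousMultilinearMap_le _ _
      _ = ‖ContinuousLinearMap.apply 𝕜 𝕜 (Y ε)‖ * ‖S‖ := by rw [h2]
      _ ≤ wl * ‖S‖ :=
          mul_le_mul (h1.trans (hYle ε)) le_rfl (norm_nonneg _) hwlnn
      _ = ‖S‖ * wl := mul_comm _ _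
  -- T ε applied to the sample points is the signed sum of the coefficients
  have hD : ∀ ε (j' : Fin n → Fin m),
      T ε (fun i => x' i (j' i)) = ∑ k, sg (ε k) * c j' k := by
    intro ε j'
    rw [hTapp, hY, map_sum]
    refine Finset.sum_congr rfl fun k _ => ?_
    rw [map_smul, smul_eq_mul]
    rfl
  -- reindex the big sum
  have step1 : (∑ j : Fin (n + 1) → Fin m, ‖S (fun i => x i (j i))‖ ^ q)
      = ∑ j' : Fin n → Fin m, ∑ k, ‖c j' k‖ ^ q := by
    rw [← Equiv.sum_comp (Fin.snocEquiv fun _ => Fin m)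
      (fun j : Fin (n+1) → Fin m => ‖S (fun i => x i (j i))‖ ^ q), Fintype.sum_prod_type_right]
    refine Finset.sum_congr rfl fun j' _ => Finset.sum_congr rfl fun k _ => ?_
    congr 1
    have harg : (fun i => x i ((Fin.snocEquiv fun _ => Fin m) (k, j') i))
        = Fin.snoc (fun i : Fin n => x' i (j' i)) (y k) := by
      funext i
      refine Fin.lastCases ?_ (fun i' => ?_) i
      · simp [Fin.snocEquiv, Fin.snoc_last, hy]
      · simp [Fin.snocEquiv, Fin.snoc_castSucc, hx']
    rw [harg]
  -- per j' : square-function bound and Rademacher averaging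
  have step2 : ∀ j' : Fin n → Fin m,
      (∑ k, ‖c j' k‖ ^ q) ≤ ((2:ℝ)^m)⁻¹ * ∑ ε : Fin m → Bool, ‖∑ k, sg (ε k) * c j' k‖ ^ q := by
    intro j'
    have hconv : ∀ z : 𝕜, ‖z‖ ^ q = ((‖z‖ ^ 2 : ℝ)) ^ (q / 2) := by
      intro z
      rw [← Real.rpow_natCast ‖z‖ 2, ← Real.rpow_mul (norm_nonneg _)]
      norm_num
      congr 1
      ring
    calc (∑ k, ‖c j' k‖ ^ q) = ∑ k, ((‖c j' k‖ ^ 2 : ℝ)) ^ (q / 2) := by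
          exact Finset.sum_congr rfl fun k _ => hconv _
      _ ≤ (∑ k, (‖c j' k‖ ^ 2 : ℝ)) ^ (q / 2) :=
          sum_rpow_le _ _ (fun k _ => by positivity) hq2
      _ = (((2:ℝ)^m)⁻¹ * ∑ ε : Fin m → Bool, ‖∑ k, sg (ε k) * c j' k‖ ^ 2) ^ (q / 2) := by
          rw [rademacher m (c j')]
          rw [inv_mul_cancel_left₀ (by positivity)]
      _ = (∑ ε : Fin m → Bool, ((2:ℝ)^m)⁻¹ * (‖∑ k, sg (ε k) * c j' k‖ ^ 2)) ^ (q / 2) := by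
          rw [Finset.mul_sum]
      _ ≤ ∑ ε : Fin m → Bool, ((2:ℝ)^m)⁻¹ * (‖∑ k, sg (ε k) * c j' k‖ ^ 2) ^ (q / 2) := by
          refine Real.rpow_arith_mean_le_arith_mean_rpow Finset.univ _ _
            (fun _ _ => by positivity) ?_ (fun _ _ => by positivity) hq2
          rw [Finset.sum_const, Finset.card_univ]
          simp only [Fintype.card_fun, Fintype.card_bool, Fintype.card_fin, nsmul_eq_mul]
          push_cast
          rw [mul_inv_cancel₀ (by positivity)]
      _ = ((2:ℝ)^m)⁻¹ * ∑ ε : Fin m → Bool, ‖∑ k, sg (ε k) * c j' k‖ ^ q := by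
          rw [Finset.mul_sum]
          exact Finset.sum_congr rfl fun ε _ => by rw [hconv]
  -- apply the hypothesis for each ε
  have step3 : ∀ ε : Fin m → Bool,
      (∑ j' : Fin n → Fin m, ‖∑ k, sg (ε k) * c j' k‖ ^ q) ≤ (c₁ * (‖S‖ * wl) * w) ^ q := by
    intro ε
    have h0 := H (T ε) m x'
    have hL : (0:ℝ) ≤ ∑ j' : Fin n → Fin m, ‖T ε (fun i => x' i (j' i))‖ ^ q :=
      Finset.sum_nonneg fun _ _ => by positivity
    have h1 : (∑ j' : Fin n → Fin m, ‖T ε (fun i => x' i (j' i))‖ ^ q)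
        ≤ (c₁ * ‖T ε‖ * w) ^ q := by
      have := Real.rpow_le_rpow (Real.rpow_nonneg hL _) h0 hq0.le
      rwa [← Real.rpow_mul hL, inv_mul_cancel₀ hq0.ne', Real.rpow_one] at this
    have h2 : (c₁ * ‖T ε‖ * w) ^ q ≤ (c₁ * (‖S‖ * wl) * w) ^ q := by
      refine Real.rpow_le_rpow (by positivity) ?_ hq0.le
      have h3 := mul_le_mul_of_nonneg_left (hTnorm ε) hc₁
      exact mul_le_mul_of_nonneg_right h3 hwnn
    calc (∑ j' : Fin n → Fin m, ‖∑ k, sg (ε k) * c j' k‖ ^ q)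
        = ∑ j' : Fin n → Fin m, ‖T ε (fun i => x' i (j' i))‖ ^ q := by
          exact Finset.sum_congr rfl fun j' _ => by rw [hD ε j']
      _ ≤ (c₁ * ‖T ε‖ * w) ^ q := h1
      _ ≤ (c₁ * (‖S‖ * wl) * w) ^ q := h2
  -- combine
  have main : (∑ j : Fin (n + 1) → Fin m, ‖S (fun i => x i (j i))‖ ^ q)
      ≤ (c₁ * (‖S‖ * wl) * w) ^ q := by
    rw [step1]
    calc (∑ j' : Fin n → Fin m, ∑ k, ‖c j' k‖ ^ q)
        ≤ ∑ j' : Fin n → Fin m,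
            ((2:ℝ)^m)⁻¹ * ∑ ε : Fin m → Bool, ‖∑ k, sg (ε k) * c j' k‖ ^ q :=
          Finset.sum_le_sum fun j' _ => step2 j'
      _ = ((2:ℝ)^m)⁻¹ * ∑ ε : Fin m → Bool,
            ∑ j' : Fin n → Fin m, ‖∑ k, sg (ε k) * c j' k‖ ^ q := by
          rw [← Finset.mul_sum, Finset.sum_comm]
      _ ≤ ((2:ℝ)^m)⁻¹ * ∑ ε : Fin m → Bool, (c₁ * (‖S‖ * wl) * w) ^ q := by
          have := Finset.sum_le_sum fun ε (_ : ε ∈ Finset.univ) => step3 ε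
          have h2 : (0:ℝ) ≤ ((2:ℝ)^m)⁻¹ := by positivity
          exact mul_le_mul_of_nonneg_left this h2
      _ = (c₁ * (‖S‖ * wl) * w) ^ q := by
          rw [Finset.sum_const, Finset.card_univ]
          simp only [Fintype.card_fun, Fintype.card_bool, Fintype.card_fin, nsmul_eq_mul]
          push_cast
          rw [← mul_assoc, inv_mul_cancel₀ (by positivity : ((2:ℝ)^m) ≠ 0), one_mul]
  have final := Real.rpow_le_rpow
    (Finset.sum_nonneg fun _ _ => by positivity) main (by positivity : (0:ℝ) ≤ q⁻¹)
  rw [← Real.rpow_mul (by positivity), mul_inv_cancel₀ hq0.ne', Real.rpow_one] at final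
  calc (∑ j : Fin (n + 1) → Fin m, ‖S (fun i => x i (j i))‖ ^ q) ^ q⁻¹
      ≤ c₁ * (‖S‖ * wl) * w := final
    _ = c₁ * ‖S‖ * ∏ i, weakNorm 𝕜 (p i) (x i) := by
        rw [Fin.prod_univ_castSucc (f := fun i => weakNorm 𝕜 (p i) (x i)), hlast]
        rw [hwl, hw, hy]
        ring
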